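/- arXiv:2011.06270 — 3 statements merged into one kernel-verified Lean document; each statement's English description precedes it below -/
import Mathlib

section
/- Let μ be a positive Borel measure on ℝ such that ∫ exp(t·x^{2k}) dμ < ∞ for some k ∈ ℕ, k ≥ 1, and some constant t > 0. If ν is another such measure with ∫ x^{2kj} dμ = ∫ x^{2kj} dν for all j ∈ ℕ, then ∫ x² dμ = ∫ x² dν. -/
open MeasureTheory Real Set
open scoped ENNReal

namespace SecondMomentAux



lemma ypos (k : ℕ) (x : ℝ) : 0 ≤ x ^ (2 * k) := (even_two_mul k).pow_nonneg x

lemma pow_le_exp_aux {c y : ℝ} (hc : 0 < c) (hy : 0 ≤ y) (j : ℕ) :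
    y ^ j ≤ ((j.factorial : ℝ) / c ^ j) * Real.exp (c * y) := by
  have h := Real.pow_div_factorial_le_exp (x := c * y) (mul_nonneg hc.le hy) j
  rw [mul_pow] at h
  have hcj : (0:ℝ) < c ^ j := pow_pos hc j
  have hj : (0:ℝ) < (j.factorial : ℝ) := by positivity
  rw [div_le_iff₀ hj] at h
  calc y ^ j = (c ^ j * y ^ j) / c ^ j := by field_simp
    _ ≤ (Real.exp (c * y) * (j.factorial : ℝ)) / c ^ j := by
        exact div_le_div_of_nonneg_right h hcj.le |>.trans_eq rfl
    _ = ((j.factorial : ℝ) / c ^ j) * Real.exp (c * y) := by ring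

lemma integ_pow_exp {k : ℕ} {μ : Measure ℝ} {c : ℝ} (hc : 0 < c)
    (hμ : Integrable (fun x : ℝ => Real.exp (c * x ^ (2 * k))) μ)
    (j : ℕ) {u : ℝ} (hu : 0 ≤ u) :
    Integrable (fun x : ℝ => x ^ (2 * k * j) * Real.exp (-u * x ^ (2 * k))) μ := by
  refine Integrable.mono (hμ.const_mul ((j.factorial : ℝ) / c ^ j)) ?_ ?_
  · exact (Continuous.mul (by continuity) (by continuity)).aestronglyMeasurable
  · refine Filter.Eventually.of_forall fun x => ?_
    have hy := ypos k x
    simp only [Real.norm_eq_abs, abs_mul, Real.abs_exp]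
    have h1 : |x ^ (2 * k * j)| = (x ^ (2 * k)) ^ j := by
      rw [abs_of_nonneg (by rw [mul_assoc]; exact (even_two_mul _).pow_nonneg x), pow_mul]
    rw [h1, abs_of_nonneg (by positivity : (0:ℝ) ≤ (j.factorial : ℝ) / c ^ j)]
    have h2 : Real.exp (-u * x ^ (2 * k)) ≤ 1 := Real.exp_le_one_iff.2 (by nlinarith)
    have h4 : (0:ℝ) ≤ (x ^ (2 * k)) ^ j := pow_nonneg hy j
    calc (x ^ (2 * k)) ^ j * Real.exp (-u * x ^ (2 * k)) ≤ (x ^ (2 * k)) ^ j * 1 :=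
          mul_le_mul_of_nonneg_left h2 h4
      _ = (x ^ (2 * k)) ^ j := mul_one _
      _ ≤ ((j.factorial : ℝ) / c ^ j) * Real.exp (c * x ^ (2 * k)) := pow_le_exp_aux hc hy j






lemma fact_add_le (j m : ℕ) : ((j + m).factorial : ℝ) ≤ m.factorial * ((m : ℝ) + j) ^ j := by
  induction j with
  | zero => simp
  | succ j ih =>
      have h1 : ((j + 1 + m).factorial : ℝ) = ((j + m : ℕ) + 1) * (j + m).factorial := by
        have : j + 1 + m = (j + m) + 1 := by ring
        rw [this, Nat.factorial_succ]; push_cast; ring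
      rw [h1]
      have h2 : ((j + m : ℕ) : ℝ) + 1 ≤ (m : ℝ) + (j + 1) := by push_cast; ring_nf; simp
      calc ((j + m : ℕ) + 1 : ℝ) * (j + m).factorial
          ≤ ((m : ℝ) + (j + 1)) * (m.factorial * ((m : ℝ) + j) ^ j) := by
            apply mul_le_mul h2 ih (by positivity) (by positivity)
        _ ≤ m.factorial * ((m : ℝ) + ((j : ℕ) + 1 : ℕ)) ^ (j + 1) := by
            push_cast
            rw [pow_succ]
            have h3 : ((m : ℝ) + j) ^ j ≤ ((m : ℝ) + (j + 1)) ^ j :=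
              pow_le_pow_left₀ (by positivity) (by linarith) j
            have h4 : (0:ℝ) ≤ (m.factorial : ℝ) * ((m:ℝ) + ((j:ℝ)+1)) := by positivity
            have h5 := mul_le_mul_of_nonneg_left h3 h4
            ring_nf at h5 ⊢
            linarith

lemma summable_aux (j : ℕ) {x : ℝ} (h0 : 0 ≤ x) (h1 : x < 1) :
    Summable (fun m : ℕ => ((m : ℝ) + j) ^ j * x ^ m) := by
  have hs1 : Summable (fun m : ℕ => (2:ℝ) ^ j * ((m : ℝ) ^ j * x ^ m)) :=
    ((summable_pow_mul_geometric_of_norm_lt_one (R := ℝ) j (by rwa [Real.norm_eq_abs, abs_of_nonneg h0])).mul_left _)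
  have hs2 : Summable (fun m : ℕ => ((2:ℝ) * j) ^ j * x ^ m) :=
    (summable_geometric_of_lt_one h0 h1).mul_left _
  apply Summable.of_nonneg_of_le (fun m => by positivity) (fun m => ?_) (hs1.add hs2)
  have hmj : ((m : ℝ) + j) ^ j ≤ (2:ℝ) ^ j * (m : ℝ) ^ j + ((2:ℝ) * j) ^ j := by
    rcases le_total (j : ℝ) (m : ℝ) with h | h
    · have : ((m : ℝ) + j) ^ j ≤ (2 * (m : ℝ)) ^ j := by
        apply pow_le_pow_left₀ (by positivity) (by linarith)
      rw [mul_pow] at this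
      nlinarith [pow_nonneg (by positivity : (0:ℝ) ≤ (2:ℝ) * j) j]
    · have : ((m : ℝ) + j) ^ j ≤ (2 * (j : ℝ)) ^ j := by
        apply pow_le_pow_left₀ (by positivity) (by linarith)
      nlinarith [pow_nonneg (by positivity : (0:ℝ) ≤ (m : ℝ)) j,
        pow_nonneg (by norm_num : (0:ℝ) ≤ 2) j,
        mul_nonneg (pow_nonneg (by norm_num : (0:ℝ) ≤ 2) j) (pow_nonneg (by positivity : (0:ℝ) ≤ (m:ℝ)) j)]
  have hx : (0:ℝ) ≤ x ^ m := by positivity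
  calc ((m : ℝ) + j) ^ j * x ^ m ≤ ((2:ℝ) ^ j * (m : ℝ) ^ j + ((2:ℝ) * j) ^ j) * x ^ m :=
        mul_le_mul_of_nonneg_right hmj hx
    _ = (2:ℝ) ^ j * ((m : ℝ) ^ j * x ^ m) + ((2:ℝ) * j) ^ j * x ^ m := by ring

lemma real_exp_tsum (z : ℝ) : Real.exp z = ∑' n : ℕ, z ^ n / n.factorial := by
  rw [Real.exp_eq_exp_ℝ, NormedSpace.exp_eq_tsum_div]




section SMAux3
variable {k : ℕ} {μ : Measure ℝ}


lemma hasSum_M {c : ℝ} (hc : 0 < c)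
    (hμ : Integrable (fun x : ℝ => Real.exp (c * x ^ (2 * k))) μ)
    (j : ℕ) {u h : ℝ} (hu : 0 ≤ u) (hh0 : 0 < h) (hhc : h < c) :
    HasSum (fun m : ℕ => ((-h) ^ m / m.factorial) *
        ∫ x : ℝ, x ^ (2 * k * (j + m)) * Real.exp (-u * x ^ (2 * k)) ∂μ)
      (∫ x : ℝ, x ^ (2 * k * j) * Real.exp (-(u + h) * x ^ (2 * k)) ∂μ) := by
  set r : ℝ := (h + c) / 2 with hr
  have hr0 : 0 < r := by positivity
  have hrh : h < r := by rw [hr]; linarith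
  have hrc : r < c := by rw [hr]; linarith
  set E : ℝ := ∫ x : ℝ, Real.exp (c * x ^ (2 * k)) ∂μ with hE
  have hE0 : 0 ≤ E := integral_nonneg fun x => (Real.exp_pos _).le
  set F : ℕ → ℝ → ℝ := fun m x =>
    ((-h) ^ m / m.factorial) * (x ^ (2 * k * (j + m)) * Real.exp (-u * x ^ (2 * k))) with hFdef
  have hF_int : ∀ m, Integrable (F m) μ := fun m => (integ_pow_exp hc hμ (j + m) hu).const_mul _
  -- pointwise bound
  have hptbd : ∀ m x, ‖F m x‖ ≤ ((h / r) ^ m * (((m : ℝ) + j) ^ j / r ^ j)) * Real.exp (c * x ^ (2 * k)) := by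
    intro m x
    have hy := ypos k x
    have hxp : |x| ^ (2 * k * (j + m)) = (x ^ (2 * k)) ^ (j + m) := by
      rw [← abs_pow, abs_of_nonneg (by rw [mul_assoc]; exact (even_two_mul _).pow_nonneg x),
        pow_mul]
    have e1 : ‖F m x‖ = (h ^ m / m.factorial) * ((x ^ (2 * k)) ^ (j + m) * Real.exp (-u * x ^ (2 * k))) := by
      simp only [hFdef, norm_mul, Real.norm_eq_abs, abs_div, abs_pow, abs_neg,
        abs_of_nonneg hh0.le, Real.abs_exp, Nat.abs_cast]
      rw [hxp]
    rw [e1]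
    have hexp1 : Real.exp (-u * x ^ (2 * k)) ≤ 1 := Real.exp_le_one_iff.2 (by nlinarith)
    have hpb : (x ^ (2 * k)) ^ (j + m) ≤ (((j + m).factorial : ℝ) / r ^ (j + m)) * Real.exp (r * x ^ (2 * k)) :=
      pow_le_exp_aux hr0 hy (j + m)
    have hre : Real.exp (r * x ^ (2 * k)) ≤ Real.exp (c * x ^ (2 * k)) :=
      Real.exp_le_exp.2 (by nlinarith)
    have h0f : (0:ℝ) < m.factorial := by positivity
    calc (h ^ m / m.factorial) * ((x ^ (2 * k)) ^ (j + m) * Real.exp (-u * x ^ (2 * k)))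
        ≤ (h ^ m / m.factorial) * ((x ^ (2 * k)) ^ (j + m) * 1) := by
          apply mul_le_mul_of_nonneg_left (mul_le_mul_of_nonneg_left hexp1 (by positivity)) (by positivity)
      _ = (h ^ m / m.factorial) * (x ^ (2 * k)) ^ (j + m) := by ring
      _ ≤ (h ^ m / m.factorial) * ((((j + m).factorial : ℝ) / r ^ (j + m)) * Real.exp (c * x ^ (2 * k))) := by
          apply mul_le_mul_of_nonneg_left _ (by positivity)
          exact hpb.trans (mul_le_mul_of_nonneg_left hre (by positivity))
      _ ≤ (h ^ m / m.factorial) * (((m.factorial * ((m : ℝ) + j) ^ j) / r ^ (j + m)) * Real.exp (c * x ^ (2 * k))) := by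
          apply mul_le_mul_of_nonneg_left _ (by positivity)
          apply mul_le_mul_of_nonneg_right _ (Real.exp_pos _).le
          exact div_le_div_of_nonneg_right (fact_add_le j m) (by positivity) |>.trans_eq rfl
      _ = ((h / r) ^ m * (((m : ℝ) + j) ^ j / r ^ j)) * Real.exp (c * x ^ (2 * k)) := by
          rw [pow_add]
          field_simp
          have hrr : r ^ m * r⁻¹ ^ m = 1 := by rw [← mul_pow, mul_inv_cancel₀ hr0.ne', one_pow]
          linear_combination (-(h ^ m * ((m : ℝ) + j) ^ j)) * hrr
  have hbound : ∀ m : ℕ, ∫ x, ‖F m x‖ ∂μ ≤ E / r ^ j * (((m : ℝ) + j) ^ j * (h / r) ^ m) := by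
    intro m
    calc ∫ x, ‖F m x‖ ∂μ ≤ ∫ x, ((h / r) ^ m * (((m : ℝ) + j) ^ j / r ^ j)) * Real.exp (c * x ^ (2 * k)) ∂μ :=
          integral_mono (hF_int m).norm (hμ.const_mul _) (fun x => hptbd m x)
      _ = E / r ^ j * (((m : ℝ) + j) ^ j * (h / r) ^ m) := by
          rw [integral_const_mul]; ring
  have hF_sum : Summable fun m => ∫ x, ‖F m x‖ ∂μ :=
    Summable.of_nonneg_of_le (fun m => integral_nonneg fun x => norm_nonneg _) hbound
      ((summable_aux j (x := h / r) (by positivity) ((div_lt_one hr0).2 hrh)).mul_left (E / r ^ j))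
  have key := hasSum_integral_of_summable_integral_norm hF_int hF_sum
  have hpt : ∀ x : ℝ, (∑' m, F m x) = x ^ (2 * k * j) * Real.exp (-(u + h) * x ^ (2 * k)) := by
    intro x
    have e2 : ∀ m : ℕ, F m x = ((-h * x ^ (2 * k)) ^ m / m.factorial) * (x ^ (2 * k * j) * Real.exp (-u * x ^ (2 * k))) := by
      intro m
      have hxe : x ^ (2 * k * (j + m)) = x ^ (2 * k * j) * (x ^ (2 * k)) ^ m := by
        rw [← pow_mul, ← pow_add]; ring_nf
      simp only [hFdef]
      rw [hxe, mul_pow]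
      ring
    calc (∑' m, F m x) = ∑' m, ((-h * x ^ (2 * k)) ^ m / m.factorial) * (x ^ (2 * k * j) * Real.exp (-u * x ^ (2 * k))) := by
          exact tsum_congr e2
      _ = (∑' m : ℕ, (-h * x ^ (2 * k)) ^ m / m.factorial) * (x ^ (2 * k * j) * Real.exp (-u * x ^ (2 * k))) := by
          rw [tsum_mul_right]
      _ = Real.exp (-h * x ^ (2 * k)) * (x ^ (2 * k * j) * Real.exp (-u * x ^ (2 * k))) := by
          rw [← real_exp_tsum]
      _ = x ^ (2 * k * j) * Real.exp (-(u + h) * x ^ (2 * k)) := by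
          rw [show (-(u + h) * x ^ (2 * k)) = (-h * x ^ (2 * k)) + (-u * x ^ (2 * k)) by ring,
            Real.exp_add]
          ring
  have e3 : (∫ x, (∑' m, F m x) ∂μ) = ∫ x : ℝ, x ^ (2 * k * j) * Real.exp (-(u + h) * x ^ (2 * k)) ∂μ :=
    integral_congr_ae (Filter.Eventually.of_forall hpt)
  rw [e3] at key
  have e4 : (fun m => ∫ a, F m a ∂μ) = fun m : ℕ => ((-h) ^ m / m.factorial) *
      ∫ x : ℝ, x ^ (2 * k * (j + m)) * Real.exp (-u * x ^ (2 * k)) ∂μ := by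
    funext m
    simp only [hFdef]
    exact integral_const_mul _ _
  rw [e4] at key
  exact key

end SMAux3



section S4
variable {k : ℕ} {μ ν : Measure ℝ} {c : ℝ}

lemma step_M (hc : 0 < c)
    (hμ : Integrable (fun x : ℝ => Real.exp (c * x ^ (2 * k))) μ)
    (hν : Integrable (fun x : ℝ => Real.exp (c * x ^ (2 * k))) ν)
    {u h : ℝ} (hu : 0 ≤ u) (hh0 : 0 ≤ h) (hhc : h < c)
    (H : ∀ j : ℕ, ∫ x : ℝ, x ^ (2 * k * j) * Real.exp (-u * x ^ (2 * k)) ∂μ =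
        ∫ x : ℝ, x ^ (2 * k * j) * Real.exp (-u * x ^ (2 * k)) ∂ν) :
    ∀ j : ℕ, ∫ x : ℝ, x ^ (2 * k * j) * Real.exp (-(u + h) * x ^ (2 * k)) ∂μ =
        ∫ x : ℝ, x ^ (2 * k * j) * Real.exp (-(u + h) * x ^ (2 * k)) ∂ν := by
  rcases eq_or_lt_of_le hh0 with rfl | hh0'
  · simpa using H
  · intro j
    have h1 := hasSum_M hc hμ j hu hh0' hhc
    have h2 := hasSum_M hc hν j hu hh0' hhc
    have he : (fun m : ℕ => ((-h) ^ m / m.factorial) *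
        ∫ x : ℝ, x ^ (2 * k * (j + m)) * Real.exp (-u * x ^ (2 * k)) ∂μ) =
        fun m : ℕ => ((-h) ^ m / m.factorial) *
        ∫ x : ℝ, x ^ (2 * k * (j + m)) * Real.exp (-u * x ^ (2 * k)) ∂ν :=
      funext fun m => by rw [H (j + m)]
    exact h1.unique (he ▸ h2)

lemma laplace_eq (hc : 0 < c)
    (hμ : Integrable (fun x : ℝ => Real.exp (c * x ^ (2 * k))) μ)
    (hν : Integrable (fun x : ℝ => Real.exp (c * x ^ (2 * k))) ν)
    (hmom : ∀ j : ℕ, ∫ x : ℝ, x ^ (2 * k * j) ∂μ = ∫ x : ℝ, x ^ (2 * k * j) ∂ν)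
    {u : ℝ} (hu : 0 ≤ u) :
    ∀ j : ℕ, ∫ x : ℝ, x ^ (2 * k * j) * Real.exp (-u * x ^ (2 * k)) ∂μ =
        ∫ x : ℝ, x ^ (2 * k * j) * Real.exp (-u * x ^ (2 * k)) ∂ν := by
  have hc2 : (0:ℝ) < c / 2 := by positivity
  have hcc : c / 2 < c := by linarith
  have ind : ∀ n : ℕ, ∀ j : ℕ,
      ∫ x : ℝ, x ^ (2 * k * j) * Real.exp (-((n : ℝ) * (c / 2)) * x ^ (2 * k)) ∂μ =
      ∫ x : ℝ, x ^ (2 * k * j) * Real.exp (-((n : ℝ) * (c / 2)) * x ^ (2 * k)) ∂ν := by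
    intro n
    induction n with
    | zero => intro j; simpa using hmom j
    | succ n ih =>
        have hst := step_M hc hμ hν (u := (n : ℝ) * (c / 2)) (h := c / 2)
          (by positivity) hc2.le hcc ih
        intro j
        have e : ((n + 1 : ℕ) : ℝ) * (c / 2) = (n : ℝ) * (c / 2) + c / 2 := by push_cast; ring
        rw [e]
        exact hst j
  set n := ⌊u / (c / 2)⌋₊ with hn
  have h1 : (n : ℝ) * (c / 2) ≤ u := by
    have := Nat.floor_le (by positivity : (0:ℝ) ≤ u / (c / 2))
    rw [← hn] at this
    calc (n : ℝ) * (c / 2) ≤ (u / (c / 2)) * (c / 2) := by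
          apply mul_le_mul_of_nonneg_right this hc2.le
      _ = u := by field_simp
  have h2 : u - (n : ℝ) * (c / 2) < c := by
    have := Nat.lt_floor_add_one (u / (c / 2))
    rw [← hn] at this
    have h3 : u < ((n : ℝ) + 1) * (c / 2) := by
      calc u = (u / (c / 2)) * (c / 2) := by field_simp
        _ < ((n : ℝ) + 1) * (c / 2) := by apply mul_lt_mul_of_pos_right this hc2
    nlinarith
  have hst := step_M hc hμ hν (u := (n : ℝ) * (c / 2)) (h := u - (n : ℝ) * (c / 2))
    (by positivity) (by linarith) h2 (ind n)
  intro j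
  have e : (n : ℝ) * (c / 2) + (u - (n : ℝ) * (c / 2)) = u := by ring
  rw [← e]
  exact hst j

end S4


noncomputable def Cα (α : ℝ) : ℝ := ∫ s in Ioi (0:ℝ), (1 - Real.exp (-s)) * s ^ (-α - 1)

lemma g_meas (α : ℝ) : Measurable fun s : ℝ => (1 - Real.exp (-s)) * s ^ (-α - 1) :=
  (measurable_const.sub (Real.measurable_exp.comp measurable_neg)).mul
    (measurable_id.pow measurable_const)

lemma g_integrable {α : ℝ} (h0 : 0 < α) (h1 : α < 1) :
    IntegrableOn (fun s : ℝ => (1 - Real.exp (-s)) * s ^ (-α - 1)) (Ioi 0) := by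
  have hmeas : AEStronglyMeasurable (fun s : ℝ => (1 - Real.exp (-s)) * s ^ (-α - 1)) volume :=
    (g_meas α).aestronglyMeasurable
  rw [← Ioc_union_Ioi_eq_Ioi (zero_le_one (α := ℝ))]
  apply IntegrableOn.union
  · have hi : IntegrableOn (fun s : ℝ => s ^ (-α)) (Ioc (0:ℝ) 1) := by
      have := intervalIntegral.intervalIntegrable_rpow' (a := (0:ℝ)) (b := 1)
        (by linarith : (-1:ℝ) < -α)
      rwa [intervalIntegrable_iff, uIoc_of_le zero_le_one] at this
    apply hi.integrable.mono hmeas.restrict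
    filter_upwards [ae_restrict_mem measurableSet_Ioc] with v hv
    have hv0 : 0 < v := hv.1
    have hsub : 1 - Real.exp (-v) ≤ v := by
      have := Real.add_one_le_exp (-v); linarith
    have hsub0 : 0 ≤ 1 - Real.exp (-v) := by
      have : Real.exp (-v) ≤ 1 := Real.exp_le_one_iff.2 (by linarith)
      linarith
    have hrp : (0:ℝ) ≤ v ^ (-α - 1) := (Real.rpow_pos_of_pos hv0 _).le
    rw [Real.norm_eq_abs, Real.norm_eq_abs, abs_of_nonneg (mul_nonneg hsub0 hrp),
      abs_of_nonneg (Real.rpow_pos_of_pos hv0 _).le]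
    calc (1 - Real.exp (-v)) * v ^ (-α - 1) ≤ v * v ^ (-α - 1) :=
          mul_le_mul_of_nonneg_right hsub hrp
      _ = v ^ (-α) := by
          rw [mul_comm, ← Real.rpow_add_one hv0.ne' (-α - 1)]; norm_num
  · have hi : IntegrableOn (fun s : ℝ => s ^ (-α - 1)) (Ioi (1:ℝ)) :=
      integrableOn_Ioi_rpow_of_lt (by linarith) one_pos
    apply hi.integrable.mono hmeas.restrict
    filter_upwards [ae_restrict_mem measurableSet_Ioi] with v hv
    have hv0 : (0:ℝ) < v := lt_trans one_pos hv
    have hsub0 : 0 ≤ 1 - Real.exp (-v) := by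
      have : Real.exp (-v) ≤ 1 := Real.exp_le_one_iff.2 (by linarith)
      linarith
    have hsub1 : 1 - Real.exp (-v) ≤ 1 := by have := (Real.exp_pos (-v)).le; linarith
    have hrp : (0:ℝ) ≤ v ^ (-α - 1) := (Real.rpow_pos_of_pos hv0 _).le
    rw [Real.norm_eq_abs, Real.norm_eq_abs, abs_of_nonneg (mul_nonneg hsub0 hrp),
      abs_of_nonneg hrp]
    nlinarith

lemma Cα_pos {α : ℝ} (h0 : 0 < α) (h1 : α < 1) : 0 < Cα α := by
  rw [Cα, setIntegral_pos_iff_support_of_nonneg_ae ?_ (g_integrable h0 h1)]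
  · have hsub : Ioi (0:ℝ) ⊆ Function.support fun s => (1 - Real.exp (-s)) * s ^ (-α - 1) := by
      intro v hv
      have h2 : 0 < 1 - Real.exp (-v) := by
        have : Real.exp (-v) < 1 := Real.exp_lt_one_iff.2 (by simpa using hv)
        linarith
      exact ne_of_gt (mul_pos h2 (Real.rpow_pos_of_pos hv _))
    calc (0:ℝ≥0∞) < volume (Ioi (0:ℝ)) := by rw [Real.volume_Ioi]; exact ENNReal.zero_lt_top
      _ ≤ volume (Function.support (fun s => (1 - Real.exp (-s)) * s ^ (-α - 1)) ∩ Ioi 0) :=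
        measure_mono (subset_inter hsub Subset.rfl)
  · filter_upwards [ae_restrict_mem measurableSet_Ioi] with v hv
    have : Real.exp (-v) ≤ 1 := Real.exp_le_one_iff.2 (by simp at hv ⊢; linarith)
    have hrp : (0:ℝ) ≤ v ^ (-α - 1) := (Real.rpow_pos_of_pos hv _).le
    exact mul_nonneg (by linarith) hrp

lemma eqon_aux {α : ℝ} {y : ℝ} (hy : 0 < y) :
    EqOn (fun lam : ℝ => (1 - Real.exp (-(lam * y))) * lam ^ (-α - 1))
      (fun lam : ℝ => y ^ (α + 1) *
        ((1 - Real.exp (-(y * lam))) * (y * lam) ^ (-α - 1))) (Ioi 0) := by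
  intro lam hlam
  have hlam0 : (0:ℝ) < lam := hlam
  have hone : y ^ (α + 1) * y ^ (-α - 1) = 1 := by
    rw [← Real.rpow_add hy]; norm_num
  simp only
  rw [Real.mul_rpow hy.le hlam0.le, mul_comm y lam]
  calc (1 - Real.exp (-(lam * y))) * lam ^ (-α - 1)
      = ((1 - Real.exp (-(lam * y))) * lam ^ (-α - 1)) * (y ^ (α + 1) * y ^ (-α - 1)) := by
        rw [hone, mul_one]
    _ = y ^ (α + 1) * ((1 - Real.exp (-(lam * y))) * (y ^ (-α - 1) * lam ^ (-α - 1))) := by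
        ring

lemma frullani_scale {α : ℝ} {y : ℝ} (hy : 0 < y) :
    ∫ lam in Ioi (0:ℝ), (1 - Real.exp (-(lam * y))) * lam ^ (-α - 1) = y ^ α * Cα α := by
  have e1 := eqon_aux (α := α) hy
  rw [setIntegral_congr_fun measurableSet_Ioi e1, integral_const_mul,
    integral_comp_mul_left_Ioi (fun s => (1 - Real.exp (-s)) * s ^ (-α - 1)) 0 hy,
    mul_zero, smul_eq_mul, ← Cα]
  have : y ^ (α + 1) * y⁻¹ = y ^ α := by
    rw [← Real.rpow_neg_one y, ← Real.rpow_add hy]; norm_num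
  rw [← mul_assoc, this]

lemma scaled_integrable {α : ℝ} (h0 : 0 < α) (h1 : α < 1) {y : ℝ} (hy : 0 < y) :
    IntegrableOn (fun lam : ℝ => (1 - Real.exp (-(lam * y))) * lam ^ (-α - 1)) (Ioi 0) := by
  have hg := g_integrable h0 h1
  have hcomp : IntegrableOn (fun lam : ℝ => (1 - Real.exp (-(y * lam))) * (y * lam) ^ (-α - 1))
      (Ioi 0) := by
    have := (integrableOn_Ioi_comp_mul_left_iff
      (fun s : ℝ => (1 - Real.exp (-s)) * s ^ (-α - 1)) 0 hy).2
    rw [mul_zero] at this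
    exact this hg
  have e1 := eqon_aux (α := α) hy
  exact IntegrableOn.congr_fun (hcomp.const_mul (y ^ (α + 1))) (eqon_aux (α := α) hy).symm
    measurableSet_Ioi



lemma isFiniteMeasure_of_exp {k : ℕ} {μ : Measure ℝ} {c : ℝ} (hc : 0 < c)
    (hμ : Integrable (fun x : ℝ => Real.exp (c * x ^ (2 * k))) μ) : IsFiniteMeasure μ := by
  constructor
  rw [← lintegral_one]
  calc ∫⁻ _x, 1 ∂μ ≤ ∫⁻ x, ENNReal.ofReal (Real.exp (c * x ^ (2 * k))) ∂μ := by
        apply lintegral_mono fun x => ?_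
        have h1 : (1:ℝ) ≤ Real.exp (c * x ^ (2 * k)) :=
          Real.one_le_exp (mul_nonneg hc.le (ypos k x))
        calc (1:ℝ≥0∞) = ENNReal.ofReal 1 := by simp
          _ ≤ _ := ENNReal.ofReal_le_ofReal h1
    _ < ⊤ := by
        rw [← ofReal_integral_eq_lintegral_ofReal hμ
          (Filter.Eventually.of_forall fun x => (Real.exp_pos _).le)]
        exact ENNReal.ofReal_lt_top

lemma exp_neg_integrable {k : ℕ} {μ : Measure ℝ} {c : ℝ} (hc : 0 < c)
    (hμ : Integrable (fun x : ℝ => Real.exp (c * x ^ (2 * k))) μ) {u : ℝ} (hu : 0 ≤ u) :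
    Integrable (fun x : ℝ => Real.exp (-u * x ^ (2 * k))) μ := by
  have h := integ_pow_exp hc hμ 0 hu
  simpa using h

lemma one_sub_exp_eq {k : ℕ} {μ ν : Measure ℝ} {c : ℝ} (hc : 0 < c)
    (hμ : Integrable (fun x : ℝ => Real.exp (c * x ^ (2 * k))) μ)
    (hν : Integrable (fun x : ℝ => Real.exp (c * x ^ (2 * k))) ν)
    (hmom : ∀ j : ℕ, ∫ x : ℝ, x ^ (2 * k * j) ∂μ = ∫ x : ℝ, x ^ (2 * k * j) ∂ν)
    {u : ℝ} (hu : 0 ≤ u) :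
    ∫ x : ℝ, (1 - Real.exp (-u * x ^ (2 * k))) ∂μ =
      ∫ x : ℝ, (1 - Real.exp (-u * x ^ (2 * k))) ∂ν := by
  haveI := isFiniteMeasure_of_exp hc hμ
  haveI := isFiniteMeasure_of_exp hc hν
  rw [integral_sub (integrable_const 1) (exp_neg_integrable hc hμ hu),
      integral_sub (integrable_const 1) (exp_neg_integrable hc hν hu)]
  have hmass : ∫ (_x : ℝ), (1:ℝ) ∂μ = ∫ (_x : ℝ), (1:ℝ) ∂ν := by
    have := hmom 0; simpa using this
  have hlap : ∫ x : ℝ, Real.exp (-u * x ^ (2 * k)) ∂μ =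
      ∫ x : ℝ, Real.exp (-u * x ^ (2 * k)) ∂ν := by
    have := laplace_eq hc hμ hν hmom hu 0; simpa using this
  rw [hmass, hlap]

lemma pt_frullani {α : ℝ} (h0 : 0 < α) (h1 : α < 1) {y : ℝ} (hy : 0 ≤ y) :
    ENNReal.ofReal (y ^ α) * ENNReal.ofReal (Cα α) =
      ∫⁻ lam in Ioi (0:ℝ), ENNReal.ofReal ((1 - Real.exp (-(lam * y))) * lam ^ (-α - 1)) := by
  rcases eq_or_lt_of_le hy with rfl | hy0
  · simp [Real.zero_rpow h0.ne']
  · rw [← ofReal_integral_eq_lintegral_ofReal (scaled_integrable h0 h1 hy0) ?_,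
      frullani_scale hy0, ENNReal.ofReal_mul (Real.rpow_nonneg hy _)]
    filter_upwards [ae_restrict_mem measurableSet_Ioi] with lam hlam
    have h2 : Real.exp (-(lam * y)) ≤ 1 :=
      Real.exp_le_one_iff.2 (by simp at hlam ⊢; positivity)
    have h3 : (0:ℝ) ≤ lam ^ (-α - 1) := (Real.rpow_pos_of_pos hlam _).le
    exact mul_nonneg (by linarith) h3

lemma pow_rpow_eq (k : ℕ) (hk : k ≠ 0) (x : ℝ) : (x ^ (2 * k)) ^ ((1:ℝ)/(k:ℝ)) = x ^ 2 := by
  have h2 : x ^ (2 * k) = (x ^ 2) ^ k := by rw [pow_mul]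
  rw [h2, ← Real.rpow_natCast (x ^ 2) k, ← Real.rpow_mul (sq_nonneg x)]
  have h3 : (k:ℝ) * (1/(k:ℝ)) = 1 := by
    field_simp
  rw [h3, Real.rpow_one]



lemma main_swap {k : ℕ} {ρ : Measure ℝ} [IsFiniteMeasure ρ] {α : ℝ}
    (hα : α = 1/(k:ℝ)) (hk0 : k ≠ 0) (h0 : 0 < α) (h1 : α < 1) :
    ENNReal.ofReal (Cα α) * ∫⁻ x : ℝ, ENNReal.ofReal (x ^ 2) ∂ρ
      = ∫⁻ lam in Ioi (0:ℝ),
          (∫⁻ x : ℝ, ENNReal.ofReal (1 - Real.exp (-(lam * x ^ (2 * k)))) ∂ρ) *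
            ENNReal.ofReal (lam ^ (-α - 1)) := by
  have hmx : Measurable fun x : ℝ => ENNReal.ofReal (x ^ 2) :=
    ENNReal.measurable_ofReal.comp (continuous_pow 2).measurable
  rw [mul_comm, ← lintegral_mul_const _ hmx]
  have hpt : ∀ x : ℝ, ENNReal.ofReal (x ^ 2) * ENNReal.ofReal (Cα α)
      = ∫⁻ lam in Ioi (0:ℝ),
          ENNReal.ofReal ((1 - Real.exp (-(lam * x ^ (2 * k)))) * lam ^ (-α - 1)) := by
    intro x
    rw [← pt_frullani h0 h1 (ypos k x)]
    congr 2
    rw [hα, pow_rpow_eq k hk0 x]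
  rw [lintegral_congr hpt, lintegral_lintegral_swap ?hmeas]
  case hmeas =>
    apply Measurable.aemeasurable
    apply ENNReal.measurable_ofReal.comp
    apply Measurable.mul
    · have : Continuous fun p : ℝ × ℝ => 1 - Real.exp (-(p.2 * p.1 ^ (2 * k))) := by
        continuity
      exact this.measurable
    · exact measurable_snd.pow measurable_const
  apply setLIntegral_congr_fun measurableSet_Ioi
  intro lam hlam; beta_reduce
  have h3 : (0:ℝ) ≤ lam ^ (-α - 1) := (Real.rpow_pos_of_pos hlam _).le
  have hpt2 : ∀ x : ℝ, ENNReal.ofReal ((1 - Real.exp (-(lam * x ^ (2 * k)))) * lam ^ (-α - 1))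
      = ENNReal.ofReal (1 - Real.exp (-(lam * x ^ (2 * k)))) * ENNReal.ofReal (lam ^ (-α - 1)) :=
    fun x => ENNReal.ofReal_mul' h3
  rw [lintegral_congr hpt2, lintegral_mul_const]
  exact ENNReal.measurable_ofReal.comp (by continuity : Continuous fun x : ℝ =>
    1 - Real.exp (-(lam * x ^ (2 * k)))).measurable

end SecondMomentAux

open MeasureTheory SecondMomentAux Set

/-- If `μ` and `ν` are positive measures on `ℝ` with finite exponential moments
`∫ exp(t·x^(2k)) dμ < ∞` (for some `t > 0`), `k ≥ 1`, and all their moments of order `2kj`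
agree, then their second moments agree. -/
theorem second_moment_determined_by_subsequence
    (μ ν : Measure ℝ) (k : ℕ) (hk : 1 ≤ k) (t s : ℝ) (ht : 0 < t) (hs : 0 < s)
    (hμ : Integrable (fun x : ℝ => Real.exp (t * x ^ (2 * k))) μ)
    (hν : Integrable (fun x : ℝ => Real.exp (s * x ^ (2 * k))) ν)
    (hmom : ∀ j : ℕ, ∫ x : ℝ, x ^ (2 * k * j) ∂μ = ∫ x : ℝ, x ^ (2 * k * j) ∂ν) :
    ∫ x : ℝ, x ^ 2 ∂μ = ∫ x : ℝ, x ^ 2 ∂ν := by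
  by_cases hk1 : k = 1
  · subst hk1
    simpa using hmom 1
  · have hk2 : 2 ≤ k := by omega
    have hk0 : k ≠ 0 := by omega
    set c := min t s with hcdef
    have hc0 : 0 < c := lt_min ht hs
    have hct : c ≤ t := by rw [hcdef]; exact min_le_left t s
    have hcs : c ≤ s := by rw [hcdef]; exact min_le_right t s
    have hcont : Continuous fun x : ℝ => Real.exp (c * x ^ (2 * k)) := by continuity
    have hμc : Integrable (fun x : ℝ => Real.exp (c * x ^ (2 * k))) μ := by
      apply hμ.mono hcont.aestronglyMeasurable
      apply Filter.Eventually.of_forall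
      intro x
      rw [Real.norm_eq_abs, Real.norm_eq_abs, Real.abs_exp, Real.abs_exp]
      exact Real.exp_le_exp.2 (mul_le_mul_of_nonneg_right hct (ypos k x))
    have hνc : Integrable (fun x : ℝ => Real.exp (c * x ^ (2 * k))) ν := by
      apply hν.mono hcont.aestronglyMeasurable
      apply Filter.Eventually.of_forall
      intro x
      rw [Real.norm_eq_abs, Real.norm_eq_abs, Real.abs_exp, Real.abs_exp]
      exact Real.exp_le_exp.2 (mul_le_mul_of_nonneg_right hcs (ypos k x))
    set α : ℝ := 1 / (k : ℝ) with hα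
    have hk1R : (1:ℝ) < (k:ℝ) := by exact_mod_cast (by omega : 1 < k)
    have h0 : 0 < α := by rw [hα]; positivity
    have h1 : α < 1 := by rw [hα, div_lt_one (by linarith)]; linarith
    haveI := isFiniteMeasure_of_exp hc0 hμc
    haveI := isFiniteMeasure_of_exp hc0 hνc
    have hC0 : ENNReal.ofReal (Cα α) ≠ 0 := ne_of_gt (ENNReal.ofReal_pos.2 (Cα_pos h0 h1))
    have key : ∫⁻ x : ℝ, ENNReal.ofReal (x ^ 2) ∂μ = ∫⁻ x : ℝ, ENNReal.ofReal (x ^ 2) ∂ν := by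
      rw [← ENNReal.mul_right_inj hC0 ENNReal.ofReal_ne_top,
        main_swap hα hk0 h0 h1, main_swap hα hk0 h0 h1]
      apply setLIntegral_congr_fun measurableSet_Ioi
      intro lam hlam
      congr 1
      have hlam0 : (0:ℝ) ≤ lam := le_of_lt hlam
      have hintμ : Integrable (fun x : ℝ => 1 - Real.exp (-lam * x ^ (2 * k))) μ :=
        (integrable_const 1).sub (exp_neg_integrable hc0 hμc hlam0)
      have hintν : Integrable (fun x : ℝ => 1 - Real.exp (-lam * x ^ (2 * k))) ν :=
        (integrable_const 1).sub (exp_neg_integrable hc0 hνc hlam0)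
      have hnn : ∀ x : ℝ, 0 ≤ 1 - Real.exp (-lam * x ^ (2 * k)) := fun x => by
        have h2 : Real.exp (-lam * x ^ (2 * k)) ≤ 1 :=
          Real.exp_le_one_iff.2 (by nlinarith [ypos k x])
        linarith
      have e : ∀ x : ℝ, -(lam * x ^ (2 * k)) = -lam * x ^ (2 * k) := fun x => (neg_mul _ _).symm
      simp_rw [e]
      rw [← ofReal_integral_eq_lintegral_ofReal hintμ (Filter.Eventually.of_forall hnn),
        ← ofReal_integral_eq_lintegral_ofReal hintν (Filter.Eventually.of_forall hnn),
        one_sub_exp_eq hc0 hμc hνc hmom hlam0]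
    rw [integral_eq_lintegral_of_nonneg_ae (Filter.Eventually.of_forall fun x => sq_nonneg x)
        (continuous_pow 2).aestronglyMeasurable,
      integral_eq_lintegral_of_nonneg_ae (Filter.Eventually.of_forall fun x => sq_nonneg x)
        (continuous_pow 2).aestronglyMeasurable,
      key]
end

section
/- Let (b_n) be reals with b_n = 0 for n < 1, and define A_n = (q^{1-n-κ}/(1-q)) · b_n b_{n-1} (∑_{j=1}^{n+1} b_j − q² ∑_{j=1}^{n-3} b_j) and B_n = (q^{3-n-κ}/(1-q)) · b_n b_{n-1} b_{n-2} b_{n-3}. Then for all n ≥ 1, q·A_n·b_{n-2} + q·B_n = B_{n+1} + b_n·A_{n-1}. -/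
/-- Identity (l2): with
`A_n = (q^(1-n-κ)/(1-q)) · b_n b_{n-1} (∑_{j=1}^{n+1} b_j − q² ∑_{j=1}^{n-3} b_j)` and
`B_n = (q^(3-n-κ)/(1-q)) · b_n b_{n-1} b_{n-2} b_{n-3}`, one has
`q·A_n·b_{n-2} + q·B_n = B_{n+1} + b_n·A_{n-1}` for all `n ≥ 1`. -/
theorem l2_identity
    (q κ : ℝ) (hq0 : 0 < q) (hq1 : q < 1) (hκ : 0 ≤ κ)
    (b : ℤ → ℝ) (hb0 : ∀ n : ℤ, n < 1 → b n = 0)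
    (A B : ℤ → ℝ)
    (hA : ∀ n : ℤ, A n = q ^ ((1 : ℝ) - n - κ) / (1 - q) * (b n * b (n - 1)) *
      ((∑ j ∈ Finset.Icc (1 : ℤ) (n + 1), b j) - q ^ 2 * ∑ j ∈ Finset.Icc (1 : ℤ) (n - 3), b j))
    (hB : ∀ n : ℤ, B n = q ^ ((3 : ℝ) - n - κ) / (1 - q) *
      (b n * b (n - 1) * b (n - 2) * b (n - 3))) :
    ∀ n : ℤ, 1 ≤ n → q * A n * b (n - 2) + q * B n = B (n + 1) + b n * A (n - 1) := by
  intro n hn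
  set t : ℝ := q ^ (-(n : ℝ) - κ) with ht
  have key : ∀ (m : ℕ) (x : ℝ), x = (m : ℝ) + (-(n : ℝ) - κ) → q ^ x = q ^ m * t := by
    intro m x hx
    rw [hx, Real.rpow_add hq0, Real.rpow_natCast]
  have h1 : q ^ ((1 : ℝ) - (n : ℝ) - κ) = q ^ (1 : ℕ) * t := key 1 _ (by push_cast; ring)
  have h3 : q ^ ((3 : ℝ) - (n : ℝ) - κ) = q ^ (3 : ℕ) * t := key 3 _ (by push_cast; ring)
  have h2a : q ^ ((3 : ℝ) - ((n + 1 : ℤ) : ℝ) - κ) = q ^ (2 : ℕ) * t :=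
    key 2 _ (by push_cast; ring)
  have h2b : q ^ ((1 : ℝ) - ((n - 1 : ℤ) : ℝ) - κ) = q ^ (2 : ℕ) * t :=
    key 2 _ (by push_cast; ring)
  have split : ∀ m : ℤ, 1 ≤ m → (∑ j ∈ Finset.Icc (1 : ℤ) m, b j) =
      (∑ j ∈ Finset.Icc (1 : ℤ) (m - 1), b j) + b m := by
    intro m hm
    have hset : Finset.Icc (1 : ℤ) m = insert m (Finset.Icc 1 (m - 1)) := by
      ext x
      simp only [Finset.mem_Icc, Finset.mem_insert]
      omega
    rw [hset, Finset.sum_insert (by simp only [Finset.mem_Icc]; omega), add_comm]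
  have hs1 : (∑ j ∈ Finset.Icc (1 : ℤ) (n + 1), b j) =
      (∑ j ∈ Finset.Icc (1 : ℤ) n, b j) + b (n + 1) := by
    rw [split (n + 1) (by omega), show n + 1 - 1 = n from by ring]
  have hs2 : (∑ j ∈ Finset.Icc (1 : ℤ) (n - 3), b j) =
      (∑ j ∈ Finset.Icc (1 : ℤ) (n - 4), b j) + b (n - 3) := by
    rcases le_or_gt 1 (n - 3) with h | h
    · rw [split (n - 3) h, show n - 3 - 1 = n - 4 from by ring]
    · rw [Finset.Icc_eq_empty (by omega), Finset.Icc_eq_empty (by omega), hb0 _ h]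
      simp
  rw [hA, hA, hB, hB, h1, h3, h2a, h2b]
  simp only [show n + 1 - 1 = n from by ring, show n + 1 - 2 = n - 1 from by ring,
    show n + 1 - 3 = n - 2 from by ring, show n - 1 - 1 = n - 2 from by ring,
    show n - 1 - 2 = n - 3 from by ring, show n - 1 + 1 = n from by ring,
    show n - 1 - 3 = n - 4 from by ring]
  rw [hs1, hs2]
  ring
end

section
/- Suppose (b_n)_{n≥1} satisfies the even/odd system of Lemma 3.1 (Equation (even-odd2)) and additionally the derived relation A_n = q^{n-2}(1+q)·∑_{j=1}^{n-1} b_j, where A_n = (q^{1-n-κ}/(1-q))·b_n b_{n-1}(∑_{j=1}^{n+1} b_j − q² ∑_{j=1}^{n-3} b_j). Then for odd n: (q^{-κ+2-n} − 1)·b_{n-1} + (q² − 1)·∑_{j=1}^{n-2} b_j + q^{-2n+5-κ}·b_n b_{n-1} b_{n-2} = 0. -/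
/-- From the system (even-odd2) and the derived relation
`A_n = q^(n-2)(1+q)·∑_{j=1}^{n-1} b_j`, one obtains, for odd `n`,
`(q^(−κ+2−n) − 1)·b_{n-1} + (q² − 1)·∑_{j=1}^{n-2} b_j + q^(−2n+5−κ)·b_n b_{n-1} b_{n-2} = 0`. -/
theorem added_relation_odd
    (q κ : ℝ) (hq0 : 0 < q) (hq1 : q < 1) (hκ : 0 ≤ κ)
    (b : ℤ → ℝ) (hb0 : ∀ n : ℤ, n < 1 → b n = 0)
    (A : ℤ → ℝ)
    (hA : ∀ n : ℤ, A n = q ^ ((1 : ℝ) - n - κ) / (1 - q) * (b n * b (n - 1)) *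
      ((∑ j ∈ Finset.Icc (1 : ℤ) (n + 1), b j) - q ^ 2 * ∑ j ∈ Finset.Icc (1 : ℤ) (n - 3), b j))
    (heven : ∀ n : ℤ, 1 ≤ n → Even n →
      b n * (b (n + 1) + b n + b (n - 1) + (1 - q ^ 2) * ∑ j ∈ Finset.Icc (1 : ℤ) (n - 2), b j)
        = (1 - q ^ (n : ℝ)) * q ^ (κ + n - 1))
    (hodd : ∀ n : ℤ, 1 ≤ n → Odd n →
      b n * (b (n + 1) + b n + b (n - 1) + (1 - q ^ 2) * ∑ j ∈ Finset.Icc (1 : ℤ) (n - 2), b j)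
        = (q ^ (-κ) - q ^ (n : ℝ)) * q ^ (κ + n - 1))
    (hAsum : ∀ n : ℤ, 1 ≤ n →
      A n = q ^ ((n : ℝ) - 2) * (1 + q) * ∑ j ∈ Finset.Icc (1 : ℤ) (n - 1), b j) :
    ∀ n : ℤ, 1 ≤ n → Odd n →
      (q ^ (-κ + 2 - (n : ℝ)) - 1) * b (n - 1)
        + (q ^ 2 - 1) * (∑ j ∈ Finset.Icc (1 : ℤ) (n - 2), b j)
        + q ^ ((-2 : ℝ) * n + 5 - κ) * (b n * b (n - 1) * b (n - 2)) = 0 := by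
  intro n hn hoddn
  -- sum step lemma
  have hstep : ∀ m : ℤ, (∑ j ∈ Finset.Icc (1 : ℤ) m, b j)
      = (∑ j ∈ Finset.Icc (1 : ℤ) (m - 1), b j) + b m := by
    intro m
    rcases le_or_gt 1 m with h | h
    · have hins : Finset.Icc (1 : ℤ) m = insert m (Finset.Icc 1 (m - 1)) := by
        ext x; simp only [Finset.mem_Icc, Finset.mem_insert]; omega
      rw [hins, Finset.sum_insert (by simp only [Finset.mem_Icc]; omega)]; ring
    · rw [Finset.Icc_eq_empty (by omega), Finset.Icc_eq_empty (by omega), hb0 m h]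
      simp
  have h1 := hodd n hn hoddn
  have h2 := hA n
  have h3 := hAsum n hn
  set s := ∑ j ∈ Finset.Icc (1 : ℤ) (n - 2), b j with hs
  have hS1 : (∑ j ∈ Finset.Icc (1 : ℤ) (n + 1), b j) = s + b (n - 1) + b n + b (n + 1) := by
    rw [hstep (n + 1), show n + 1 - 1 = n from by ring, hstep n, hstep (n - 1),
      show n - 1 - 1 = n - 2 from by ring]
  have hS3 : (∑ j ∈ Finset.Icc (1 : ℤ) (n - 3), b j) = s - b (n - 2) := by
    have := hstep (n - 2)
    rw [show n - 2 - 1 = n - 3 from by ring] at this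
    linarith [this]
  have hS2 : (∑ j ∈ Finset.Icc (1 : ℤ) (n - 1), b j) = s + b (n - 1) := by
    have := hstep (n - 1)
    rw [show n - 1 - 1 = n - 2 from by ring] at this
    linarith [this]
  rw [hS1, hS3] at h2
  rw [hS2] at h3
  set u := q ^ ((n : ℝ) - 2) with hu
  set v := q ^ (-κ) with hv
  have hu0 : 0 < u := Real.rpow_pos_of_pos hq0 _
  have hv0 : 0 < v := Real.rpow_pos_of_pos hq0 _
  have hqne : q ≠ 0 := hq0.ne'
  have h1q : (1 : ℝ) - q ≠ 0 := by linarith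
  have mulr : ∀ a c : ℝ, q ^ a * q ^ c = q ^ (a + c) := fun a c =>
    (Real.rpow_add hq0 a c).symm
  have q2e : (q : ℝ) ^ (2 : ℕ) = q ^ (2 : ℝ) := by
    rw [← Real.rpow_natCast q 2]; norm_num
  -- exponent relations
  have e1 : q ^ ((n : ℝ)) = u * q ^ 2 := by
    rw [hu, q2e, mulr, show (n : ℝ) - 2 + 2 = (n : ℝ) from by ring]
  have e2 : q ^ (κ + (n : ℝ) - 1) = u * q / v := by
    rw [eq_div_iff hv0.ne', hu, hv, mulr, show κ + (n : ℝ) - 1 + -κ = (n : ℝ) - 2 + 1 from by ring,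
      ← mulr, Real.rpow_one]
  have e3 : q ^ ((1 : ℝ) - (n : ℝ) - κ) = v / (u * q) := by
    rw [eq_div_iff (by positivity), hu, ← mul_assoc, mulr, ← Real.rpow_add_one hqne,
      show (1 : ℝ) - (n : ℝ) - κ + ((n : ℝ) - 2) + 1 = -κ from by ring, hv]
  have e4 : q ^ (-κ + 2 - (n : ℝ)) = v / u := by
    rw [eq_div_iff hu0.ne', hu, mulr, show -κ + 2 - (n : ℝ) + ((n : ℝ) - 2) = -κ from by ring, hv]
  have e5 : q ^ ((-2 : ℝ) * (n : ℝ) + 5 - κ) = v * q / (u * u) := by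
    rw [eq_div_iff (by positivity), hu, ← mul_assoc, mulr, mulr,
      show (-2 : ℝ) * (n : ℝ) + 5 - κ + ((n : ℝ) - 2) + ((n : ℝ) - 2) = -κ + 1 from by ring,
      Real.rpow_add_one hqne, hv]
  rw [e1, e2] at h1
  rw [e3] at h2
  rw [h3] at h2
  rw [e4, e5]
  -- clear denominators
  have h1' : b n * (b (n + 1) + b n + b (n - 1) + (1 - q ^ 2) * s) * v
      = (v - u * q ^ 2) * (u * q) := by
    field_simp at h1
    linear_combination h1
  have h2' : u * (1 + q) * (s + b (n - 1)) * ((u * q) * (1 - q))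
      = v * (b n * b (n - 1)) * (s + b (n - 1) + b n + b (n + 1) - q ^ 2 * (s - b (n - 2))) := by
    field_simp at h2
    linear_combination h2
  -- main polynomial identity
  have hN : q * (u * v * b (n - 1) - u ^ 2 * b (n - 1) + (q ^ 2 - 1) * u ^ 2 * s
      + v * q * (b n * b (n - 1) * b (n - 2))) = 0 := by
    linear_combination (-1 : ℝ) * h2' - b (n - 1) * h1'
  have hM : u * v * b (n - 1) - u ^ 2 * b (n - 1) + (q ^ 2 - 1) * u ^ 2 * s
      + v * q * (b n * b (n - 1) * b (n - 2)) = 0 := by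
    have := mul_eq_zero.mp hN
    rcases this with h | h
    · exact absurd h hqne
    · exact h
  field_simp
  linear_combination hM
end
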